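/- Let K be a bounded linear operator on H, and let Λ = (Λ_i)_{i∈I} and Γ = (Γ_i)_{i∈I} be two K-g-frames for H such that ∑_{i∈I} Λ_i*(Γ_i f) = 0 for all f ∈ H (i.e., T_Λ T_Γ* = 0). Let U, V be bounded linear operators on H such that U K* = K* U and U is bounded below, i.e., there is C > 0 with C‖f‖² ≤ ‖Uf‖² for all f ∈ H. Then the g-sequence (Λ_i U + Γ_i V)_{i∈I} is a K-g-frame for H. -/

import Mathlib

open ContinuousLinearMap

noncomputable section

variable {I : Type*} {H : Type*} [NormedAddCommGroup H] [InnerProductSpace ℂ H] [CompleteSpace H]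
  {G : I → Type*} [∀ i, NormedAddCommGroup (G i)] [∀ i, InnerProductSpace ℂ (G i)]
  [∀ i, CompleteSpace (G i)]

/-- `Λ` is a Bessel g-sequence: for some `B > 0`, `∑ᵢ ‖Λᵢ f‖² ≤ B ‖f‖²` for all `f`. -/
def IsGBessel (Λ : ∀ i, H →L[ℂ] G i) : Prop :=
  ∃ B : ℝ, 0 < B ∧ ∀ f : H,
    Summable (fun i => ‖Λ i f‖ ^ 2) ∧ (∑' i, ‖Λ i f‖ ^ 2) ≤ B * ‖f‖ ^ 2

/-- `Λ` is a `K`-g-frame: for some `A, B > 0`,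
`A ‖K* f‖² ≤ ∑ᵢ ‖Λᵢ f‖² ≤ B ‖f‖²` for all `f`. -/
def IsKgFrame (K : H →L[ℂ] H) (Λ : ∀ i, H →L[ℂ] G i) : Prop :=
  ∃ A B : ℝ, 0 < A ∧ 0 < B ∧ ∀ f : H,
    Summable (fun i => ‖Λ i f‖ ^ 2) ∧
    A * ‖ContinuousLinearMap.adjoint K f‖ ^ 2 ≤ (∑' i, ‖Λ i f‖ ^ 2) ∧
    (∑' i, ‖Λ i f‖ ^ 2) ≤ B * ‖f‖ ^ 2

/-- `T : (⊕ᵢ Hᵢ)_{ℓ²} → H` is the synthesis operator of `Λ`, characterized by its adjoint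
(the analysis operator) satisfying `(T* f)ᵢ = Λᵢ f` for all `f`. -/
def IsSynthesis (Λ : ∀ i, H →L[ℂ] G i) (T : lp G 2 →L[ℂ] H) : Prop :=
  ∀ (f : H) (i : I), (ContinuousLinearMap.adjoint T f : ∀ i, G i) i = Λ i f

/-- `Γ` is a `K`-dual (Bessel g-sequence) of `Λ`: `K f = ∑ᵢ Λᵢ* (Γᵢ f)` for all `f`,
the sum converging in `H`. -/
def IsKDual (K : H →L[ℂ] H) (Λ Γ : ∀ i, H →L[ℂ] G i) : Prop :=
  ∀ f : H, HasSum (fun i => ContinuousLinearMap.adjoint (Λ i) (Γ i f)) (K f)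

/-- if `Λ`, `Γ` are `K`-g-frames with `∑ᵢ Λᵢ*(Γᵢ f) = 0` for all `f`,
`U K* = K* U`, and `U` is bounded below, then `(Λᵢ U + Γᵢ V)ᵢ` is a `K`-g-frame. -/
theorem isKgFrame_comp_add_comp
    (K : H →L[ℂ] H) (Λ Γ : ∀ i, H →L[ℂ] G i)
    (hΛ : IsKgFrame K Λ) (hΓ : IsKgFrame K Γ)
    (h0 : ∀ f : H, HasSum (fun i => ContinuousLinearMap.adjoint (Λ i) (Γ i f)) 0)
    (U V : H →L[ℂ] H)
    (hUK : U ∘L ContinuousLinearMap.adjoint K = ContinuousLinearMap.adjoint K ∘L U)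
    (C : ℝ) (hC : 0 < C) (hU : ∀ f : H, C * ‖f‖ ^ 2 ≤ ‖U f‖ ^ 2) :
    IsKgFrame K (fun i => Λ i ∘L U + Γ i ∘L V) := by
  obtain ⟨A₁, B₁, hA₁, hB₁, hΛ'⟩ := hΛ
  obtain ⟨A₂, B₂, hA₂, hB₂, hΓ'⟩ := hΓ
  refine ⟨A₁ * C, B₁ * (‖U‖ ^ 2 + 1) + B₂ * (‖V‖ ^ 2 + 1), by positivity, by positivity,
    fun f => ?_⟩
  obtain ⟨ha_sum, ha_lo, ha_hi⟩ := hΛ' (U f)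
  obtain ⟨hc_sum, -, hc_hi⟩ := hΓ' (V f)
  have hinner : HasSum (fun i => (inner ℂ (Λ i (U f)) (Γ i (V f)) : ℂ)) 0 := by
    have h := (h0 (V f)).mapL (innerSL ℂ (U f))
    simpa [ContinuousLinearMap.adjoint_inner_right] using h
  have hre : HasSum (fun i => 2 * Complex.re (inner ℂ (Λ i (U f)) (Γ i (V f)) : ℂ)) 0 := by
    have h := (hinner.mapL Complex.reCLM).mul_left 2
    simpa using h
  have hb : HasSum (fun i => ‖(Λ i ∘L U + Γ i ∘L V) f‖ ^ 2)
      ((∑' i, ‖Λ i (U f)‖ ^ 2) + (∑' i, ‖Γ i (V f)‖ ^ 2)) := by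
    have h := (ha_sum.hasSum.add hre).add hc_sum.hasSum
    have h2 : ((∑' i, ‖Λ i (U f)‖ ^ 2) + 0) + (∑' i, ‖Γ i (V f)‖ ^ 2)
        = (∑' i, ‖Λ i (U f)‖ ^ 2) + (∑' i, ‖Γ i (V f)‖ ^ 2) := by ring
    rw [h2] at h
    refine h.congr_fun fun i => ?_
    have := norm_add_sq (𝕜 := ℂ) (Λ i (U f)) (Γ i (V f))
    simp only [ContinuousLinearMap.add_apply, ContinuousLinearMap.comp_apply]
    rw [this]
    simp [RCLike.re_to_complex]
  refine ⟨hb.summable, ?_, ?_⟩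
  · rw [hb.tsum_eq]
    have h1 : ContinuousLinearMap.adjoint K (U f) = U (ContinuousLinearMap.adjoint K f) := by
      have := congrArg (fun T : H →L[ℂ] H => T f) hUK
      simpa using this.symm
    have h2 : C * ‖ContinuousLinearMap.adjoint K f‖ ^ 2
        ≤ ‖ContinuousLinearMap.adjoint K (U f)‖ ^ 2 := by
      rw [h1]; exact hU _
    have h3 : A₁ * (C * ‖ContinuousLinearMap.adjoint K f‖ ^ 2)
        ≤ A₁ * ‖ContinuousLinearMap.adjoint K (U f)‖ ^ 2 :=
      mul_le_mul_of_nonneg_left h2 hA₁.le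
    have h4 : (0:ℝ) ≤ ∑' i, ‖Γ i (V f)‖ ^ 2 :=
      tsum_nonneg fun i => sq_nonneg _
    nlinarith [ha_lo]
  · rw [hb.tsum_eq]
    have hUf : ‖U f‖ ^ 2 ≤ ‖U‖ ^ 2 * ‖f‖ ^ 2 := by
      have := U.le_opNorm f
      nlinarith [norm_nonneg (U f), norm_nonneg U, norm_nonneg f]
    have hVf : ‖V f‖ ^ 2 ≤ ‖V‖ ^ 2 * ‖f‖ ^ 2 := by
      have := V.le_opNorm f
      nlinarith [norm_nonneg (V f), norm_nonneg V, norm_nonneg f]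
    nlinarith [sq_nonneg ‖f‖, ha_hi, hc_hi]
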